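/- For every citation vector x₁ ≥ x₂ ≥ ... ≥ x_m, the tempered ν̄-index is not larger than the g-index: ν̄ ≤ g. -/
import Mathlib


open Finset

/-- Partial sum `S_k = x₁ + ⋯ + x_k` of a citation vector, with the natural
extension `S_k = S_m` for `k > m`. -/
def pSum {m : ℕ} (x : Fin m → ℕ) (k : ℕ) : ℕ :=
  ∑ i : Fin m, if (i : ℕ) < k then x i else 0

/-- `m*(j)`: the number of papers with at least `j` citations. -/
def mStar {m : ℕ} (x : Fin m → ℕ) (j : ℕ) : ℕ :=
  (Finset.univ.filter fun i => j ≤ x i).card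

/-- The Hirsch `h`-index: `h = max {j ≥ 1 : m*(j) ≥ j}` (max ∅ = 0). -/
noncomputable def hIndex {m : ℕ} (x : Fin m → ℕ) : ℕ :=
  sSup {j : ℕ | 1 ≤ j ∧ j ≤ mStar x j}

/-- The Egghe `g`-index: `g = max {1 ≤ k ≤ m : S_k ≥ k²}` (max ∅ = 0). -/
noncomputable def gIndex {m : ℕ} (x : Fin m → ℕ) : ℕ :=
  sSup {k : ℕ | 1 ≤ k ∧ k ≤ m ∧ k ^ 2 ≤ pSum x k}

/-- The unconstrained `g*`-index: `g* = max {k ≥ 1 : S_k ≥ k²}` (max ∅ = 0). -/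
noncomputable def gStar {m : ℕ} (x : Fin m → ℕ) : ℕ :=
  sSup {k : ℕ | 1 ≤ k ∧ k ^ 2 ≤ pSum x k}

/-- The `ν`-index: `ν = max {j ≥ 1 : Σ_{i : x_i ≥ j} x_i ≥ j²}` (max ∅ = 0). -/
noncomputable def nuIndex {m : ℕ} (x : Fin m → ℕ) : ℕ :=
  sSup {j : ℕ | 1 ≤ j ∧ j ^ 2 ≤ ∑ i ∈ Finset.univ.filter (fun i => j ≤ x i), x i}

/-- The tempered `ν̄`-index: `ν̄ = max {1 ≤ j ≤ m : Σ_{i : x_i ≥ j} x_i ≥ j²}` (max ∅ = 0). -/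
noncomputable def nuBar {m : ℕ} (x : Fin m → ℕ) : ℕ :=
  sSup {j : ℕ | 1 ≤ j ∧ j ≤ m ∧ j ^ 2 ≤ ∑ i ∈ Finset.univ.filter (fun i => j ≤ x i), x i}

/-- The parametric index `ν_α = max {j ≥ 1 : Σ_{i : x_i ≥ j} x_i^α ≥ j^(α+1)}` (max ∅ = 0),
with real powers. -/
noncomputable def nuAlpha {m : ℕ} (x : Fin m → ℕ) (α : ℝ) : ℕ :=
  sSup {j : ℕ | 1 ≤ j ∧
    (j : ℝ) ^ (α + 1) ≤ ∑ i ∈ Finset.univ.filter (fun i => j ≤ x i), (x i : ℝ) ^ α}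

/-- Extension of a finite citation vector by fictitious zeros. -/
def extByZero {m : ℕ} (x : Fin m → ℕ) (i : ℕ) : ℕ :=
  if h : i < m then x ⟨i, h⟩ else 0

lemma key_mem {m : ℕ} (x : Fin m → ℕ) (hx : Antitone x) {j : ℕ}
    (hj1 : 1 ≤ j) (hjm : j ≤ m)
    (h : j ^ 2 ≤ ∑ i ∈ Finset.univ.filter (fun i => j ≤ x i), x i) :
    j ^ 2 ≤ pSum x j := by
  by_cases hc : ∃ i₀ : Fin m, j ≤ x i₀ ∧ j ≤ (i₀ : ℕ)
  · obtain ⟨i₀, hxi₀, hji₀⟩ := hc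
    have key : ∀ i : Fin m, (i : ℕ) < j → j ≤ x i := by
      intro i hi
      exact le_trans hxi₀ (hx (by omega : i ≤ i₀))
    have : (j : ℕ) * j ≤ pSum x j := by
      unfold pSum
      calc j * j = ∑ i : Fin m, if (i : ℕ) < j then j else 0 := by
            rw [Fin.sum_univ_eq_sum_range (fun i => if i < j then j else 0) m,
              ← Finset.sum_filter]
            have hr : (Finset.range m).filter (· < j) = Finset.range j := by
              ext k; simp; omega
            rw [hr, Finset.sum_const, Finset.card_range, smul_eq_mul]
        _ ≤ _ := by
            apply Finset.sum_le_sum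
            intro i _
            split
            · exact key i (by assumption)
            · exact le_refl 0
    nlinarith [this]
  · push_neg at hc
    have hsub : (Finset.univ.filter fun i : Fin m => j ≤ x i) ⊆
        Finset.univ.filter fun i : Fin m => (i : ℕ) < j := by
      intro i hi
      simp only [mem_filter, mem_univ, true_and] at *
      have := hc i hi; omega
    calc j ^ 2 ≤ ∑ i ∈ Finset.univ.filter (fun i => j ≤ x i), x i := h
      _ ≤ ∑ i ∈ Finset.univ.filter (fun i : Fin m => (i:ℕ) < j), x i :=
          Finset.sum_le_sum_of_subset hsub
      _ = pSum x j := by unfold pSum; rw [Finset.sum_filter]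

theorem stmt8 {m : ℕ} (hm : 1 ≤ m) (x : Fin m → ℕ) (hx : Antitone x) :
    nuBar x ≤ gIndex x := by
  unfold nuBar gIndex
  set S := {j : ℕ | 1 ≤ j ∧ j ≤ m ∧ j ^ 2 ≤ ∑ i ∈ Finset.univ.filter (fun i => j ≤ x i), x i}
  set T := {k : ℕ | 1 ≤ k ∧ k ≤ m ∧ k ^ 2 ≤ pSum x k}
  have hsub : S ⊆ T := by
    rintro j ⟨hj1, hjm, hj⟩
    exact ⟨hj1, hjm, key_mem x hx hj1 hjm hj⟩
  have hbdd : BddAbove T := ⟨m, fun k hk => hk.2.1⟩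
  by_cases hne : S.Nonempty
  · exact csSup_le_csSup hbdd hne hsub
  · rw [Set.not_nonempty_iff_eq_empty] at hne
    simp [hne]
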